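/- Let m, Δ be positive integers with 2 ≤ m and Δ < f(m) where f(m) = m - 2 + m(m-1)/(2^m - 1 - m). Set γ = ((2^m - 1 - m)(m - Δ - 2) + m(m-1)) / ((m-2)·2^{m-1} + 1) (for m ≥ 3), and define c_i = (γ·∑_{j=0}^{i} C(m-1,j) - ((m-Δ-2+γ)/m)·∑_{j=0}^{i} C(m,j)) / C(m-1,i) for 0 ≤ i ≤ m-2. Then γ > 0, c_{m-2} = 1, 0 < c_0, and c_i ≤ c_{i+1} for 0 ≤ i ≤ m-3. -/

import Mathlib

open Finset

lemma sumA (n : ℕ) : ∀ i : ℕ, (∑ j ∈ range (i+1), (n+1).choose j) + n.choose i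
    = 2 * ∑ j ∈ range (i+1), n.choose j := by
  intro i
  induction i with
  | zero => simp
  | succ i ih =>
    rw [Finset.sum_range_succ, Finset.sum_range_succ (f := fun j => n.choose j),
      Nat.choose_succ_succ]
    simp only [Nat.succ_eq_add_one]
    omega

lemma Kq (n : ℕ) : ∀ i : ℕ, i ≤ n →
    ((n:ℚ) - 2*i + 1) * (∑ j ∈ range (i+1), (n.choose j : ℚ))
      ≤ ((n:ℚ) - i + 1) * (n.choose i : ℚ) := by
  intro i
  induction i with
  | zero => intro _; simp
  | succ i ih =>
    intro hi
    have hK := ih (by omega)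
    have hBb : (n.choose i : ℚ) ≤ ∑ j ∈ range (i+1), (n.choose j : ℚ) :=
      Finset.single_le_sum (f := fun j => (n.choose j : ℚ))
        (fun j _ => by positivity) (self_mem_range_succ i)
    have hbpos : (0:ℚ) ≤ (n.choose i : ℚ) := by positivity
    have hL : ((n:ℚ) - 2*i - 1) * (∑ j ∈ range (i+1), (n.choose j : ℚ))
        ≤ ((n:ℚ) - i) * (n.choose i : ℚ) := by nlinarith
    have hid : ((i:ℚ) + 1) * (n.choose (i+1) : ℚ) = ((n:ℚ) - i) * (n.choose i : ℚ) := by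
      have := Nat.choose_succ_right_eq n i
      have h2 : ((n.choose (i+1) * (i+1) : ℕ) : ℚ) = ((n.choose i * (n - i) : ℕ) : ℚ) := by
        exact congrArg (Nat.cast : ℕ → ℚ) this
      push_cast [Nat.cast_sub (by omega : i ≤ n)] at h2
      linarith
    rw [Finset.sum_range_succ]
    push_cast
    nlinarith [hL, hid]

lemma Lq (n : ℕ) (i : ℕ) (hi : i ≤ n) :
    ((n:ℚ) - 2*i - 1) * (∑ j ∈ range (i+1), (n.choose j : ℚ))
      ≤ ((n:ℚ) - i) * (n.choose i : ℚ) := by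
  have hK := Kq n i hi
  have hBb : (n.choose i : ℚ) ≤ ∑ j ∈ range (i+1), (n.choose j : ℚ) :=
    Finset.single_le_sum (f := fun j => (n.choose j : ℚ))
      (fun j _ => by positivity) (self_mem_range_succ i)
  have hbpos : (0:ℚ) ≤ (n.choose i : ℚ) := by positivity
  nlinarith

lemma monoB (n : ℕ) (i : ℕ) (hi : i + 1 ≤ n) :
    (∑ j ∈ range (i+1), (n.choose j : ℚ)) * (n.choose (i+1) : ℚ)
      ≤ (∑ j ∈ range (i+2), (n.choose j : ℚ)) * (n.choose i : ℚ) := by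
  have hL := Lq n i (by omega)
  have hid : ((i:ℚ) + 1) * (n.choose (i+1) : ℚ) = ((n:ℚ) - i) * (n.choose i : ℚ) := by
    have := Nat.choose_succ_right_eq n i
    have h2 : ((n.choose (i+1) * (i+1) : ℕ) : ℚ) = ((n.choose i * (n - i) : ℕ) : ℚ) := by
      exact congrArg (Nat.cast : ℕ → ℚ) this
    push_cast [Nat.cast_sub (by omega : i ≤ n)] at h2
    linarith
  have hbpos : (0:ℚ) ≤ (n.choose i : ℚ) := by positivity
  set B := ∑ j ∈ range (i+1), (n.choose j : ℚ) with hB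
  set b := (n.choose i : ℚ) with hb
  set b' := (n.choose (i+1) : ℚ) with hb'
  rw [Finset.sum_range_succ (f := fun j => (n.choose j : ℚ)) (n := i+1), ← hb']
  have h3 : ((n:ℚ)-2*i-1) * B * b ≤ ((n:ℚ)-i)*b*b := by nlinarith [hL, hbpos]
  have e1 : ((i:ℚ)+1) * ((B + b') * b) = ((i:ℚ)+1)*B*b + ((n:ℚ)-i)*b*b := by
    linear_combination b * hid
  have e2 : ((i:ℚ)+1) * (B * b') = ((n:ℚ)-i)*B*b := by linear_combination B * hid
  have h4 : ((i:ℚ)+1) * (B * b') ≤ ((i:ℚ)+1) * ((B + b') * b) := by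
    rw [e1, e2]; linarith
  have hip : (0:ℚ) < (i:ℚ)+1 := by positivity
  exact le_of_mul_le_mul_left h4 hip

theorem stmt4 (m Δ : ℕ) (hm : 2 ≤ m) (hΔ : 1 ≤ Δ)
    (hΔf : (Δ : ℚ) < (m : ℚ) - 2 + m * (m - 1) / (2 ^ m - 1 - m))
    (γ : ℚ)
    (hγ : γ = ((2 ^ m - 1 - (m : ℚ)) * ((m : ℚ) - Δ - 2) + m * (m - 1))
              / (((m : ℚ) - 2) * 2 ^ (m - 1) + 1))
    (c : ℕ → ℚ)
    (hc : ∀ i, i ≤ m - 2 →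
      c i = (γ * ∑ j ∈ Finset.range (i + 1), ((m - 1).choose j : ℚ)
              - (((m : ℚ) - Δ - 2 + γ) / m) * ∑ j ∈ Finset.range (i + 1), (m.choose j : ℚ))
            / ((m - 1).choose i : ℚ)) :
    0 < γ ∧ c (m - 2) = 1 ∧ 0 < c 0 ∧ ∀ i, i + 1 ≤ m - 2 → c i ≤ c (i + 1) := by
  obtain ⟨k, rfl⟩ : ∃ k, m = k + 2 := ⟨m - 2, by omega⟩
  simp only [show k + 2 - 1 = k + 1 from rfl, show k + 2 - 2 = k from rfl] at hc hγ hΔf ⊢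
  push_cast at hΔf hγ hc
  set x : ℚ := (2:ℚ)^(k+1) with hxdef
  have hxx : (2:ℚ)^(k+2) = x*2 := by rw [hxdef]; ring
  rw [hxx] at hΔf hγ
  -- basic positivity facts
  have hxk : ((k:ℚ)+2) ≤ x := by
    have h0 : k + 2 ≤ 2^(k+1) := by
      have h1 : k < 2^k := Nat.lt_two_pow_self
      have h2 : 2^(k+1) = 2^k * 2 := pow_succ 2 k
      omega
    rw [hxdef]; exact_mod_cast h0
  have hS : (0:ℚ) < 2*x - 1 - ((k:ℚ)+2) := by nlinarith
  have hD : (0:ℚ) < (k:ℚ)*x + 1 := by positivity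
  have hk2 : (0:ℚ) < (k:ℚ)+2 := by positivity
  -- γ * D identity
  have hγD : γ * ((k:ℚ)*x + 1)
      = (2*x - 1 - ((k:ℚ)+2)) * ((k:ℚ)+2 - Δ - 2) + ((k:ℚ)+2)*((k:ℚ)+1) := by
    rw [hγ]
    have hD' : ((k:ℚ)+2-2) * x + 1 ≠ 0 := by
      intro h; apply hD.ne'; linarith [h]
    rw [div_mul_eq_mul_div, div_eq_iff hD']
    ring
  -- numerator positivity from hΔf
  have hnum : (0:ℚ) < (2*x - 1 - ((k:ℚ)+2)) * ((k:ℚ)+2 - Δ - 2) + ((k:ℚ)+2)*((k:ℚ)+1) := by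
    have hΔf' : (Δ:ℚ) < (k:ℚ) + 2 - 2 + ((k:ℚ) + 2) * ((k:ℚ) + 2 - 1) / (2*x - 1 - ((k:ℚ)+2)) := by
      rw [show 2*x - 1 - ((k:ℚ)+2) = x*2 - 1 - ((k:ℚ)+2) by ring]
      exact hΔf
    have h1 : ((Δ:ℚ) - ((k:ℚ)+2-2)) * (2*x - 1 - ((k:ℚ)+2)) < ((k:ℚ)+2)*((k:ℚ)+2-1) := by
      rw [← lt_div_iff₀ hS]
      linarith [hΔf']
    nlinarith [h1]
  have hγpos : 0 < γ := by
    have : γ = ((2*x - 1 - ((k:ℚ)+2)) * ((k:ℚ)+2 - Δ - 2) + ((k:ℚ)+2)*((k:ℚ)+1))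
        / ((k:ℚ)*x + 1) := by
      rw [eq_div_iff hD.ne']; exact hγD
    rw [this]; exact div_pos hnum hD
  -- sum facts
  have hBk : ∑ j ∈ range (k+1), ((k+1).choose j : ℚ) = x - 1 := by
    have h1 : (∑ j ∈ range (k+2), (k+1).choose j) = 2^(k+1) := Nat.sum_range_choose (k+1)
    have h2 : (∑ j ∈ range (k+1), (k+1).choose j) + (k+1).choose (k+1) = 2^(k+1) := by
      rw [← Finset.sum_range_succ]; exact h1
    rw [Nat.choose_self] at h2
    have h3 : ((∑ j ∈ range (k+1), (k+1).choose j : ℕ) : ℚ) = ((2^(k+1) - 1 : ℕ) : ℚ) := by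
      exact_mod_cast congrArg (fun t => ((t : ℕ) : ℚ)) (by omega : (∑ j ∈ range (k+1), (k+1).choose j) = 2^(k+1) - 1)
    push_cast [Nat.cast_sub (Nat.one_le_two_pow)] at h3
    rw [hxdef]
    convert h3 using 2
  have hSsum : ∀ i : ℕ, ∑ j ∈ range (i+1), ((k+2).choose j : ℚ)
      = 2 * ∑ j ∈ range (i+1), ((k+1).choose j : ℚ) - ((k+1).choose i : ℚ) := by
    intro i
    have := sumA (k+1) i
    have h2 : ((∑ j ∈ range (i+1), (k+2).choose j : ℕ) : ℚ)
        + (((k+1).choose i : ℕ) : ℚ) = 2 * ((∑ j ∈ range (i+1), (k+1).choose j : ℕ) : ℚ) := by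
      exact_mod_cast congrArg (Nat.cast : ℕ → ℚ) this
    push_cast at h2 ⊢
    linarith
  have hbk : ((k+1).choose k : ℚ) = (k:ℚ)+1 := by
    rw [Nat.choose_succ_self_right]; push_cast; ring
  refine ⟨hγpos, ?_, ?_, ?_⟩
  · -- c k = 1
    have hck := hc k le_rfl
    rw [hBk, hSsum k, hbk, hBk] at hck
    rw [hck, div_eq_one_iff_eq (by positivity : ((k:ℚ)+1) ≠ 0)]
    field_simp
    linear_combination hγD
  · -- c 0 > 0
    have hc0 := hc 0 (Nat.zero_le k)
    simp only [zero_add, Finset.sum_range_one, Nat.choose_zero_right, Nat.cast_one] at hc0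
    have hW : c 0 * (((k:ℚ)+2) * ((k:ℚ)*x + 1))
        = ((k:ℚ)+2-Δ-2)*((k:ℚ)+2)*(x-(k:ℚ)-2) + ((k:ℚ)+2)*((k:ℚ)+1)^2 := by
      rw [hc0]
      clear_value x
      field_simp
      linear_combination ((k:ℚ)+1) * hγD
    have h6 : (0:ℚ) ≤ ((2*x - 1 - ((k:ℚ)+2)) * ((k:ℚ)+2 - Δ - 2) + ((k:ℚ)+2)*((k:ℚ)+1))
        * (x - ((k:ℚ)+2)) * ((k:ℚ)+2) :=
      mul_nonneg (mul_nonneg hnum.le (by linarith)) (by positivity)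
    have h7 : (0:ℚ) < ((k:ℚ)*x+1) * (((k:ℚ)+1)*((k:ℚ)+2)) := by positivity
    have hWpos : (0:ℚ) < ((k:ℚ)+2-Δ-2)*((k:ℚ)+2)*(x-(k:ℚ)-2) + ((k:ℚ)+2)*((k:ℚ)+1)^2 := by
      have key : (0:ℚ) < (2*x - 1 - ((k:ℚ)+2))
          * (((k:ℚ)+2-Δ-2)*((k:ℚ)+2)*(x-(k:ℚ)-2) + ((k:ℚ)+2)*((k:ℚ)+1)^2) := by
        linarith [h6, h7]
      by_contra hcon
      push_neg at hcon
      have h8 : (0:ℚ) ≤ (2*x - 1 - ((k:ℚ)+2))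
          * (-(((k:ℚ)+2-Δ-2)*((k:ℚ)+2)*(x-(k:ℚ)-2) + ((k:ℚ)+2)*((k:ℚ)+1)^2)) :=
        mul_nonneg hS.le (by linarith)
      linarith [key, h8]
    by_contra hcon
    push_neg at hcon
    have hPP : (0:ℚ) < ((k:ℚ)+2) * ((k:ℚ)*x + 1) := mul_pos hk2 hD
    have h9 : (0:ℚ) ≤ (-(c 0)) * (((k:ℚ)+2) * ((k:ℚ)*x + 1)) :=
      mul_nonneg (by linarith) hPP.le
    linarith [hW, hWpos, h9]
  · -- monotonicity
    intro i hi
    have hci := hc i (by omega)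
    have hci1 := hc (i+1) hi
    rw [hSsum i] at hci
    rw [hSsum (i+1)] at hci1
    have hbipos : (0:ℚ) < ((k+1).choose i : ℚ) :=
      Nat.cast_pos.mpr (Nat.choose_pos (by omega : i ≤ k+1))
    have hbi1pos : (0:ℚ) < ((k+1).choose (i+1) : ℚ) :=
      Nat.cast_pos.mpr (Nat.choose_pos (by omega : i+1 ≤ k+1))
    have hmono := monoB (k+1) i (by omega)
    set B : ℚ := ∑ j ∈ range (i+1), ((k+1).choose j : ℚ) with hBdef
    set B' : ℚ := ∑ j ∈ range (i+2), ((k+1).choose j : ℚ) with hB'def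
    set b : ℚ := ((k+1).choose i : ℚ) with hbdef
    set b' : ℚ := ((k+1).choose (i+1) : ℚ) with hb'def
    have hkey : (c (i+1) - c i) * (b * b' * (((k:ℚ)+2) * ((k:ℚ)*x + 1)))
        = ((k:ℚ)+1)*((k:ℚ)+2)*(Δ:ℚ) * (B' * b - B * b') := by
      have hn : c i * (b * (((k:ℚ)+2))) = γ*((k:ℚ)+2)*B - ((k:ℚ)+2-Δ-2+γ)*(2*B - b) := by
        rw [hci]
        field_simp
      have hn1 : c (i+1) * (b' * (((k:ℚ)+2))) = γ*((k:ℚ)+2)*B' - ((k:ℚ)+2-Δ-2+γ)*(2*B' - b') := by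
        rw [hci1]
        field_simp
      linear_combination (b*((k:ℚ)*x+1)) * hn1 - (b'*((k:ℚ)*x+1)) * hn
        + ((k:ℚ)*(B'*b - B*b')) * hγD
    have hΔq : (0:ℚ) < (Δ:ℚ) := by exact_mod_cast hΔ
    have hrhs : (0:ℚ) ≤ ((k:ℚ)+1)*((k:ℚ)+2)*(Δ:ℚ) * (B' * b - B * b') := by
      apply mul_nonneg (by positivity)
      linarith [hmono]
    have hP : (0:ℚ) < b * b' * (((k:ℚ)+2) * ((k:ℚ)*x + 1)) := by positivity
    by_contra hcon
    push_neg at hcon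
    have h9 : (0:ℚ) < (c i - c (i+1)) * (b * b' * (((k:ℚ)+2) * ((k:ℚ)*x + 1))) :=
      mul_pos (by linarith) hP
    linarith [hkey, hrhs, h9]
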